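/- Let g(z) be a polynomial with integer coefficients and let d ≥ 1 be an integer. If all coefficients of the formal power series 1 − g(−z)/(1−z)^d are non-negative, then g(−1) ≤ 0. -/

import Mathlib

open PowerSeries Polynomial

/-- If `F` eventually has differences ≥ 1 (given by `f`), then `F` is eventually ≥ 1. -/
lemma stmt2_aux_growth (f F : ℕ → ℤ) (N : ℕ)
    (hF : ∀ n, N ≤ n → F (n + 1) - F n = f (n + 1))
    (hf : ∀ n, N ≤ n → 1 ≤ f n) :
    ∃ N', N ≤ N' ∧ ∀ n, N' ≤ n → 1 ≤ F n := by
  have key : ∀ m : ℕ, F N + m ≤ F (N + m) := by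
    intro m
    induction m with
    | zero => simp
    | succ m ih =>
      have h1 := hF (N + m) (Nat.le_add_right _ _)
      have h2 := hf (N + m + 1) (by omega)
      push_cast
      have : N + (m + 1) = (N + m) + 1 := by omega
      rw [this]
      push_cast at ih
      linarith
  refine ⟨N + (1 - F N).toNat, Nat.le_add_right _ _, fun n hn => ?_⟩
  have hm : N ≤ n := le_trans (Nat.le_add_right _ _) hn
  have := key (n - N)
  have hE : N + (n - N) = n := by omega
  rw [hE] at this
  have : (1 - F N).toNat ≤ (n - N : ℕ) := by omega
  have h3 : 1 - F N ≤ ((n - N : ℕ) : ℤ) := le_trans (Int.self_le_toNat _) (by exact_mod_cast this)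
  linarith

/-- If `g(z) ∈ ℤ[z]`, `d ≥ 1`, and all the coefficients of the formal power
series `1 - g(-z)/(1-z)^d` (where `1/(1-z)^d = ∑ binom(n+d-1,d-1) zⁿ`) are
non-negative, then `g(-1) ≤ 0`. -/
theorem stmt2 (g : Polynomial ℤ) (d : ℕ) (hd : 1 ≤ d)
    (h : ∀ n : ℕ, 0 ≤ PowerSeries.coeff (R := ℤ) n
      (1 - (↑(g.comp (-Polynomial.X)) : PowerSeries ℤ) *
        PowerSeries.mk fun m => ((m + d - 1).choose (d - 1) : ℤ))) :
    g.eval (-1) ≤ 0 := by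
  by_contra hS
  push_neg at hS
  have hS1 : 1 ≤ g.eval (-1) := hS
  set G : Polynomial ℤ := g.comp (-Polynomial.X) with hG
  set D : ℕ := g.natDegree with hD
  have hGdeg : G.natDegree ≤ D := by
    calc G.natDegree ≤ g.natDegree * (-Polynomial.X : Polynomial ℤ).natDegree :=
          Polynomial.natDegree_comp_le
    _ ≤ D := by simp [hD]
  set c : ℕ → ℤ := fun k => G.coeff k with hc
  set F : ℕ → ℕ → ℤ := fun e n => ∑ k ∈ Finset.range (D + 1), c k * ((n - k + e).choose e : ℤ)
    with hF
  -- Step A : F 0 n = g.eval (-1)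
  have stepA : ∀ n, F 0 n = g.eval (-1) := by
    intro n
    have h1 : G.eval 1 = g.eval (-1) := by
      rw [hG, Polynomial.eval_comp]; simp
    rw [Polynomial.eval_eq_sum_range' (lt_of_le_of_lt hGdeg (Nat.lt_succ_self D)) 1] at h1
    simp only [one_pow, mul_one] at h1
    rw [← h1, hF]
    simp [hc]
  -- Step B : recurrence
  have stepB : ∀ e n, D ≤ n → F (e + 1) (n + 1) - F (e + 1) n = F e (n + 1) := by
    intro e n hn
    rw [hF]
    simp only
    rw [← Finset.sum_sub_distrib]
    apply Finset.sum_congr rfl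
    intro k hk
    rw [Finset.mem_range] at hk
    have hkn : k ≤ n := by omega
    have e1 : n + 1 - k = (n - k) + 1 := by omega
    rw [e1, ← mul_sub]
    congr 1
    have e2 : n - k + 1 + (e + 1) = (n - k + (e + 1)) + 1 := by omega
    rw [e2, Nat.choose_succ_succ (n - k + (e + 1)) e]
    have e3 : n - k + (e + 1) = (n - k + 1) + e := by omega
    push_cast
    rw [e3]
    ring
  -- Step C : F (d-1) n ≤ 0 for n ≥ max D 1
  have stepC : ∀ n, D ≤ n → 1 ≤ n → F (d - 1) n ≤ 0 := by
    intro n hDn h1n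
    have hh := h n
    rw [map_sub, PowerSeries.coeff_mul] at hh
    have hone : (PowerSeries.coeff (R := ℤ) n) 1 = 0 := by
      rw [PowerSeries.coeff_one, if_neg (by omega)]
    rw [hone] at hh
    have hsum : ∑ p ∈ Finset.HasAntidiagonal.antidiagonal n,
        (PowerSeries.coeff (R := ℤ) p.1) (↑G : PowerSeries ℤ) *
          (PowerSeries.coeff (R := ℤ) p.2) (PowerSeries.mk fun m => ((m + d - 1).choose (d - 1) : ℤ))
        = ∑ k ∈ Finset.range (n + 1), c k * ((n - k + d - 1).choose (d - 1) : ℤ) := by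
      rw [Finset.Nat.sum_antidiagonal_eq_sum_range_succ_mk]
      apply Finset.sum_congr rfl
      intro k _
      rw [Polynomial.coeff_coe, PowerSeries.coeff_mk]
    rw [hsum] at hh
    have hres : ∑ k ∈ Finset.range (n + 1), c k * ((n - k + d - 1).choose (d - 1) : ℤ)
        = F (d - 1) n := by
      rw [hF]
      simp only
      have h1 : ∑ k ∈ Finset.range (n + 1), c k * ((n - k + d - 1).choose (d - 1) : ℤ)
          = ∑ k ∈ Finset.range (n + 1), c k * ((n - k + (d - 1)).choose (d - 1) : ℤ) :=
        Finset.sum_congr rfl fun k hk => by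
          rw [Finset.mem_range] at hk
          have : n - k + d - 1 = n - k + (d - 1) := by omega
          rw [this]
      rw [h1]
      exact (Finset.sum_subset (Finset.range_subset_range.mpr (by omega))
        (fun k _ hk => by
          rw [Finset.mem_range, not_lt] at hk
          rw [show c k = 0 from Polynomial.coeff_eq_zero_of_natDegree_lt (by omega),
            zero_mul])).symm
    rw [hres] at hh
    linarith
  -- Step D : induction, F e eventually ≥ 1
  have stepD : ∀ e, ∃ N, D ≤ N ∧ ∀ n, N ≤ n → 1 ≤ F e n := by
    intro e
    induction e with
    | zero => exact ⟨D, le_refl D, fun n _ => by rw [stepA]; exact hS1⟩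
    | succ e ih =>
      obtain ⟨N, hN, hN1⟩ := ih
      obtain ⟨N', hN', hN'1⟩ := stmt2_aux_growth (F e) (F (e + 1)) N
        (fun n hn => stepB e n (le_trans hN hn))
        (fun n hn => hN1 n (by omega))
      exact ⟨N', le_trans hN hN', hN'1⟩
  obtain ⟨N, hN, hN1⟩ := stepD (d - 1)
  have h1 := hN1 (N + D + 1) (by omega)
  have h2 := stepC (N + D + 1) (by omega) (by omega)
  linarith
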